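/- Let G be a strongly connected digraph having the Riemann–Roch property, i.e., there exist a chip-distribution K and an integer t such that dist(x) − dist(K − x) = t − deg(x) for every chip-distribution x. Then every minimally non-terminating chip-distribution on G has degree equal to dist(0), where 0 denotes the all-zero chip-distribution. -/
import Mathlib


open Finset

variable {V : Type} [Fintype V] [DecidableEq V]

/-- The outdegree of a vertex `v` in the multidigraph with multiplicity function `m`
(`m u v` is the number of directed edges from `u` to `v`). -/
def outdeg (m : V → V → ℕ) (v : V) : ℤ := ∑ u, (m v u : ℤ)

/-- The indegree of a vertex. -/
def indeg (m : V → V → ℕ) (v : V) : ℤ := ∑ u, (m u v : ℤ)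

/-- The digraph is loopless. -/
def Loopless (m : V → V → ℕ) : Prop := ∀ v, m v v = 0

/-- The digraph is strongly connected: every vertex reaches every vertex on a directed path. -/
def StronglyConnected (m : V → V → ℕ) : Prop :=
  ∀ u v : V, Relation.ReflTransGen (fun a b => 0 < m a b) u v

/-- Firing vertex `v` in chip-distribution `x`: `v` sends a chip along each outgoing edge. -/
def fire (m : V → V → ℕ) (x : V → ℤ) (v : V) : V → ℤ :=
  fun u => x u + (m v u : ℤ) - (if u = v then outdeg m v else 0)

/-- The degree (total number of chips) of a chip-distribution / divisor. -/
def degSum (x : V → ℤ) : ℤ := ∑ v, x v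

/-- The state of the chip-firing game after `n` steps, starting from `x` and
firing the vertices `s 0, s 1, …` in this order. -/
def gameState (m : V → V → ℕ) (x : V → ℤ) (s : ℕ → V) : ℕ → (V → ℤ)
  | 0 => x
  | n + 1 => fire m (gameState m x s n) (s n)

/-- `s` encodes an infinite legal chip-firing game starting from `x`:
at each step the fired vertex is active. -/
def InfGame (m : V → V → ℕ) (x : V → ℤ) (s : ℕ → V) : Prop :=
  ∀ n, outdeg m (s n) ≤ gameState m x s n (s n)

/-- A chip-distribution is terminating if no infinite legal game starts from it. -/
def Terminating (m : V → V → ℕ) (x : V → ℤ) : Prop :=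
  ¬ ∃ s : ℕ → V, InfGame m x s

/-- The Laplacian of the digraph applied to `z`. -/
def lap (m : V → V → ℕ) (z : V → ℤ) : V → ℤ :=
  fun u => (∑ v, (m v u : ℤ) * z v) - outdeg m u * z u

/-- Linear equivalence: `x ∼ y` iff `x = y + L z` for some integer vector `z`. -/
def LinEquiv (m : V → V → ℕ) (x y : V → ℤ) : Prop :=
  ∃ z : V → ℤ, x = y + lap m z

/-- The distance of `x` from the non-terminating distributions:
the minimum degree of a nonnegative `y` such that `x + y` is non-terminating. -/
noncomputable def chipDist (m : V → V → ℕ) (x : V → ℤ) : ℕ :=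
  sInf {n : ℕ | ∃ y : V → ℤ, 0 ≤ y ∧ degSum y = (n : ℤ) ∧ ¬ Terminating m (x + y)}

/-- A chip-distribution is minimally non-terminating if it is non-terminating
but removing one chip from any vertex makes it terminating. -/
def MinNonTerm (m : V → V → ℕ) (x : V → ℤ) : Prop :=
  ¬ Terminating m x ∧
    ∀ v : V, Terminating m (fun u => x u - (if u = v then 1 else 0))


section Aux

variable (m : V → V → ℕ)

lemma fire_add_right (x c : V → ℤ) (v : V) :
    fire m (x + c) v = fire m x v + c := by
  funext u
  simp only [fire, Pi.add_apply]
  ring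

lemma gameState_add (x c : V → ℤ) (s : ℕ → V) (n : ℕ) :
    gameState m (x + c) s n = gameState m x s n + c := by
  induction n with
  | zero => rfl
  | succ n ih => simp [gameState, ih, fire_add_right]

lemma gameState_succ (x : V → ℤ) (s : ℕ → V) (n : ℕ) :
    gameState m x s (n + 1) = fire m (gameState m x s n) (s n) := rfl

lemma nonterm_add_nonneg {x c : V → ℤ} (hc : 0 ≤ c) (hx : ¬ Terminating m x) :
    ¬ Terminating m (x + c) := by
  obtain ⟨s, hs⟩ := not_not.mp hx
  refine not_not.mpr ⟨s, fun n => ?_⟩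
  rw [gameState_add]
  have h1 := hs n
  have h2 : (0:ℤ) ≤ c (s n) := hc (s n)
  simp only [Pi.add_apply]
  omega

lemma outdeg_nonneg (v : V) : 0 ≤ outdeg m v :=
  Finset.sum_nonneg fun _ _ => Int.natCast_nonneg _

lemma degSum_fire (x : V → ℤ) (v : V) : degSum (fire m x v) = degSum x := by
  simp only [degSum, fire, Finset.sum_sub_distrib, Finset.sum_add_distrib]
  have h1 : (∑ u, if u = v then outdeg m v else 0) = outdeg m v := by
    simp
  rw [h1, outdeg]
  ring

lemma degSum_gameState (x : V → ℤ) (s : ℕ → V) (n : ℕ) :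
    degSum (gameState m x s n) = degSum x := by
  induction n with
  | zero => rfl
  | succ n ih => rw [gameState_succ, degSum_fire, ih]

lemma gameState_shift (x : V → ℤ) (s : ℕ → V) (M k : ℕ) :
    gameState m x s (M + k) = gameState m (gameState m x s M) (fun i => s (M + i)) k := by
  induction k with
  | zero => rfl
  | succ k ih => rw [← Nat.add_assoc, gameState_succ, ih]; rfl

lemma nonterm_tail {x : V → ℤ} {s : ℕ → V} (hs : InfGame m x s) (M : ℕ) :
    ¬ Terminating m (gameState m x s M) := by
  refine not_not.mpr ⟨fun i => s (M + i), fun n => ?_⟩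
  rw [← gameState_shift]
  exact hs (M + n)

lemma state_nonneg_of_fired (hloop : Loopless m) {x : V → ℤ} {s : ℕ → V}
    (hs : InfGame m x s) (w : V) :
    ∀ n, (∃ k, k < n ∧ s k = w) → 0 ≤ gameState m x s n w := by
  intro n
  induction n with
  | zero => rintro ⟨k, hk, -⟩; omega
  | succ n ih =>
    rintro ⟨k, hk, hkw⟩
    rw [gameState_succ]
    by_cases h : w = s n
    · subst h
      have hleg := hs n
      have hm : (m (s n) (s n) : ℤ) = 0 := by simp [hloop (s n)]
      simp only [fire, if_pos rfl, hm, if_true]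
      omega
    · have hk' : k < n := by
        rcases Nat.lt_succ_iff_lt_or_eq.mp hk with h' | h'
        · exact h'
        · exact absurd (h' ▸ hkw).symm h
      have h0 := ih ⟨k, hk', hkw⟩
      have hm : (0:ℤ) ≤ m (s n) w := Int.natCast_nonneg _
      simp only [fire, if_neg h]
      omega

end Aux


section Aux2

variable (m : V → V → ℕ)

/-- One chip at `v`. -/
def oneAt (v : V) : V → ℤ := fun u => if u = v then 1 else 0

lemma oneAt_nonneg (v : V) : (0 : V → ℤ) ≤ oneAt v := by
  intro u
  simp only [oneAt, Pi.zero_apply]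
  split <;> omega

lemma degSum_oneAt (v : V) : degSum (oneAt v) = 1 := by
  simp [degSum, oneAt]

lemma degSum_sub (a b : V → ℤ) : degSum (a - b) = degSum a - degSum b := by
  simp [degSum, Finset.sum_sub_distrib]

lemma eq_zero_of_nonneg_deg_zero {y : V → ℤ} (hy : 0 ≤ y) (h : degSum y = 0) : y = 0 := by
  funext v
  have := (Finset.sum_eq_zero_iff_of_nonneg (fun i _ => hy i)).mp h v (Finset.mem_univ v)
  simpa using this

lemma nonterm_mono {x x' : V → ℤ} (h : x ≤ x') (hx : ¬ Terminating m x) :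
    ¬ Terminating m x' := by
  have hc : (0 : V → ℤ) ≤ x' - x := fun v => sub_nonneg.mpr (h v)
  have hx' : x + (x' - x) = x' := by ring
  exact hx' ▸ nonterm_add_nonneg m hc hx

lemma distSet_nonempty {x0 : V → ℤ} (hx0 : ¬ Terminating m x0) (z : V → ℤ) :
    {n : ℕ | ∃ y : V → ℤ, 0 ≤ y ∧ degSum y = (n : ℤ) ∧ ¬ Terminating m (z + y)}.Nonempty := by
  set y : V → ℤ := fun v => max (x0 v - z v) 0 with hy
  have hy0 : (0 : V → ℤ) ≤ y := fun v => le_max_right _ _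
  have hdy : 0 ≤ degSum y := Finset.sum_nonneg fun v _ => hy0 v
  refine ⟨(degSum y).toNat, y, hy0, by rw [Int.toNat_of_nonneg hdy], ?_⟩
  refine nonterm_mono m (fun v => ?_) hx0
  simp only [Pi.add_apply, hy]
  have := le_max_left (x0 v - z v) 0
  omega

lemma chipDist_mem {x0 : V → ℤ} (hx0 : ¬ Terminating m x0) (z : V → ℤ) :
    ∃ y : V → ℤ, 0 ≤ y ∧ degSum y = (chipDist m z : ℤ) ∧ ¬ Terminating m (z + y) :=
  Nat.sInf_mem (distSet_nonempty m hx0 z)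

lemma chipDist_le {z y : V → ℤ} {n : ℕ} (h : 0 ≤ y) (hd : degSum y = (n : ℤ))
    (hnt : ¬ Terminating m (z + y)) : chipDist m z ≤ n :=
  Nat.sInf_le ⟨y, h, hd, hnt⟩

lemma chipDist_eq_zero {z : V → ℤ} (h : ¬ Terminating m z) : chipDist m z = 0 :=
  Nat.eq_zero_of_le_zero (chipDist_le m (le_refl _) (by simp [degSum]) (by simpa using h))

lemma chipDist_pos_step {x0 : V → ℤ} (hx0 : ¬ Terminating m x0) (z : V → ℤ)
    (h : chipDist m z ≠ 0) :
    ∃ v, chipDist m (z + oneAt v) < chipDist m z := by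
  obtain ⟨y, hy, hdy, hnt⟩ := chipDist_mem m hx0 z
  have hv : ∃ v, 1 ≤ y v := by
    by_contra hcon
    push_neg at hcon
    have hzero : y = 0 := funext fun v => by
      have h1 := hcon v
      have h2 : (0:ℤ) ≤ y v := hy v
      simp only [Pi.zero_apply]
      omega
    rw [hzero] at hdy
    simp [degSum] at hdy
    omega
  obtain ⟨v, hv⟩ := hv
  have hpos : 1 ≤ chipDist m z := Nat.one_le_iff_ne_zero.mpr h
  refine ⟨v, lt_of_le_of_lt (b := chipDist m z - 1) ?_ (by omega)⟩
  refine chipDist_le m (y := y - oneAt v) (fun u => ?_) ?_ ?_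
  · simp only [Pi.sub_apply, Pi.zero_apply, oneAt]
    have := hy u
    simp only [Pi.zero_apply] at this
    split <;> rename_i hh
    · subst hh; omega
    · omega
  · rw [degSum_sub, degSum_oneAt, hdy]
    push_cast
    omega
  · have : z + oneAt v + (y - oneAt v) = z + y := by ring
    rw [this]
    exact hnt

lemma minNonTerm_deg {K : V → ℤ} {t : ℤ}
    (hK : ∀ x : V → ℤ, (chipDist m x : ℤ) - (chipDist m (K - x) : ℤ) = t - degSum x)
    {x : V → ℤ} (hx : MinNonTerm m x) : degSum x = t := by
  have hx0 := hx.1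
  have hdx : chipDist m x = 0 := chipDist_eq_zero m hx0
  have hsub : ∀ v : V, (fun u => x u - (if u = v then 1 else 0)) = x - oneAt v :=
    fun v => rfl
  have hdx1 : ∀ v, chipDist m (x - oneAt v) = 1 := by
    intro v
    have mem1 : 1 ∈ {n : ℕ | ∃ y : V → ℤ, 0 ≤ y ∧ degSum y = (n : ℤ) ∧
        ¬ Terminating m (x - oneAt v + y)} := by
      refine ⟨oneAt v, oneAt_nonneg v, by rw [degSum_oneAt]; norm_num, ?_⟩
      have : x - oneAt v + oneAt v = x := by ring
      rw [this]; exact hx0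
    have not0 : 0 ∉ {n : ℕ | ∃ y : V → ℤ, 0 ≤ y ∧ degSum y = (n : ℤ) ∧
        ¬ Terminating m (x - oneAt v + y)} := by
      rintro ⟨y, hy, hdy, hnt⟩
      have hz : y = 0 := eq_zero_of_nonneg_deg_zero hy (by exact_mod_cast hdy)
      rw [hz, add_zero] at hnt
      exact hnt ((hsub v) ▸ hx.2 v)
    have h1 : chipDist m (x - oneAt v) ≤ 1 := Nat.sInf_le mem1
    have h2 : chipDist m (x - oneAt v) ∈ _ := Nat.sInf_mem ⟨1, mem1⟩
    rcases Nat.lt_or_ge (chipDist m (x - oneAt v)) 1 with hlt | hge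
    · exact absurd (Nat.lt_one_iff.mp hlt ▸ h2) not0
    · exact le_antisymm h1 hge
  have e1 := hK x
  rw [hdx] at e1
  have hKzero : chipDist m (K - x) = 0 := by
    by_contra hne
    obtain ⟨v, hlt⟩ := chipDist_pos_step m hx0 (K - x) hne
    have e2 := hK (x - oneAt v)
    rw [hdx1 v] at e2
    have hKx : K - (x - oneAt v) = K - x + oneAt v := by ring
    rw [hKx, degSum_sub, degSum_oneAt] at e2
    omega
  rw [hKzero] at e1
  simp at e1
  omega

end Aux2


section Aux3

variable (m : V → V → ℕ)

lemma exists_boundary {r : V → V → Prop} {S : Set V} :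
    ∀ {a b : V}, Relation.ReflTransGen r a b → a ∈ S → b ∉ S →
      ∃ c d, c ∈ S ∧ d ∉ S ∧ r c d := by
  intro a b h
  induction h with
  | refl => intro ha hb; exact absurd ha hb
  | @tail c d _ h2 ih =>
    intro ha hb
    by_cases hc : c ∈ S
    · exact ⟨c, d, hc, hb, h2⟩
    · exact ih ha hc

lemma exists_nonneg_nonterm (hloop : Loopless m) (hconn : StronglyConnected m)
    {x : V → ℤ} (hx : ¬ Terminating m x) :
    ∃ y : V → ℤ, 0 ≤ y ∧ degSum y = degSum x ∧ ¬ Terminating m y := by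
  classical
  obtain ⟨s, hs⟩ := not_not.mp hx
  set Sinf : Set V := {v | {n | s n = v}.Infinite} with hSdef
  -- a vertex that fires infinitely often
  have hSne : ∃ v, v ∈ Sinf := by
    obtain ⟨v, hv⟩ := Finite.exists_infinite_fiber s
    exact ⟨v, Set.infinite_coe_iff.mp hv⟩
  -- eventually only vertices of Sinf fire
  have hBfin : {n | s n ∉ Sinf}.Finite := by
    have hsub : {n | s n ∉ Sinf} ⊆ ⋃ v ∈ {v : V | v ∉ Sinf}, {n | s n = v} := by
      intro n hn
      exact Set.mem_biUnion hn rfl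
    refine Set.Finite.subset (Set.Finite.biUnion (Set.toFinite _) fun v hv => ?_) hsub
    exact Set.not_infinite.mp hv
  obtain ⟨N, hN⟩ : ∃ N, ∀ n, N ≤ n → s n ∈ Sinf := by
    obtain ⟨b, hb⟩ := hBfin.bddAbove
    refine ⟨b + 1, fun n hn => ?_⟩
    by_contra hcon
    have := hb hcon
    omega
  -- a uniform time after which every vertex of Sinf has fired
  set f : V → ℕ := fun v => if h : {n | s n = v}.Infinite then h.nonempty.choose else 0
    with hf
  have hf_spec : ∀ v ∈ Sinf, s (f v) = v := by
    intro v hv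
    have hv' : {n | s n = v}.Infinite := hv
    show s (if h : {n | s n = v}.Infinite then h.nonempty.choose else 0) = v
    rw [dif_pos hv']
    exact hv'.nonempty.choose_spec
  set M : ℕ := (Finset.univ.sup f) + 1 with hM
  have hfM : ∀ v, f v < M := fun v =>
    Nat.lt_succ_of_le (Finset.le_sup (Finset.mem_univ v))
  have hstate : ∀ v ∈ Sinf, ∀ n, M ≤ n → 0 ≤ gameState m x s n v := by
    intro v hv n hn
    exact state_nonneg_of_fired m hloop hs v n ⟨f v, lt_of_lt_of_le (hfM v) hn, hf_spec v hv⟩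
  -- every vertex fires infinitely often
  have hSall : ∀ v, v ∈ Sinf := by
    by_contra hcon
    push_neg at hcon
    obtain ⟨u, hu⟩ := hcon
    obtain ⟨w, hw⟩ := hSne
    obtain ⟨a, b, ha, hb, hab⟩ := exists_boundary (hconn w u) hw hu
    set S' : Finset V := Finset.univ.filter (· ∈ Sinf) with hS'
    have hbS' : b ∉ S' := by simp [hS', hb]
    set σ : ℕ → ℤ := fun n => ∑ v ∈ S', gameState m x s n v with hσ
    -- each step at time ≥ N does not increase σ, and a step firing `a` decreases it
    have hstep : ∀ n, N ≤ n → σ (n + 1) ≤ σ n ∧ (s n = a → σ (n + 1) ≤ σ n - 1) := by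
      intro n hn
      have hsn : s n ∈ S' := by simp [hS', hN n hn]
      have hexp : σ (n + 1) = σ n + (∑ v ∈ S', (m (s n) v : ℤ)) - outdeg m (s n) := by
        simp only [hσ, gameState_succ, fire]
        rw [Finset.sum_sub_distrib, Finset.sum_add_distrib]
        have : (∑ v ∈ S', if v = s n then outdeg m (s n) else 0) = outdeg m (s n) := by
          rw [Finset.sum_ite_eq' S' (s n) (fun _ => outdeg m (s n))]
          simp [hsn]
        rw [this]
      have hle : (∑ v ∈ S', (m (s n) v : ℤ)) ≤ outdeg m (s n) :=
        Finset.sum_le_sum_of_subset_of_nonneg (Finset.subset_univ S')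
          (fun v _ _ => Int.natCast_nonneg _)
      constructor
      · omega
      · intro hsna
        subst hsna
        have hins : (∑ v ∈ insert b S', (m (s n) v : ℤ)) =
            (m (s n) b : ℤ) + ∑ v ∈ S', (m (s n) v : ℤ) := Finset.sum_insert hbS'
        have hsub2 : (∑ v ∈ insert b S', (m (s n) v : ℤ)) ≤ outdeg m (s n) :=
          Finset.sum_le_sum_of_subset_of_nonneg (Finset.subset_univ _)
            (fun v _ _ => Int.natCast_nonneg _)
        have hab1 : (1 : ℤ) ≤ (m (s n) b : ℤ) := by exact_mod_cast hab
        omega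
    -- σ is non-increasing after N
    have hmono : ∀ n k, N ≤ n → σ (n + k) ≤ σ n := by
      intro n k hn
      induction k with
      | zero => exact le_refl _
      | succ k ih =>
        have h1 : σ (n + k + 1) ≤ σ (n + k) := (hstep (n + k) (by omega)).1
        have h2 : n + (k + 1) = n + k + 1 := rfl
        rw [h2]
        exact le_trans h1 ih
    -- `a` fires arbitrarily late
    have hafire : ∀ n, ∃ p, n ≤ p ∧ s p = a := by
      intro n
      have hainf : {k | s k = a}.Infinite := ha
      obtain ⟨p, hp1, hp2⟩ := hainf.exists_gt n
      exact ⟨p, le_of_lt hp2, hp1⟩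
    have hσ0 : ∀ n, M ≤ n → 0 ≤ σ n := by
      intro n hn
      refine Finset.sum_nonneg fun v hv => ?_
      have hv' : v ∈ Sinf := by simpa [hS'] using hv
      exact hstate v hv' n hn
    have hNle : N ≤ max N M := le_max_left _ _
    have hMle : M ≤ max N M := le_max_right _ _
    have hdesc : ∀ k : ℕ, ∃ n, max N M ≤ n ∧ σ n ≤ σ (max N M) - k := by
      intro k
      induction k with
      | zero => exact ⟨max N M, le_refl _, by simp⟩
      | succ k ih =>
        obtain ⟨n, hn1, hn2⟩ := ih
        obtain ⟨p, hp1, hp2⟩ := hafire n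
        have hσpn : σ p ≤ σ n := by
          have := hmono n (p - n) (by omega)
          rwa [Nat.add_sub_cancel' hp1] at this
        have hlast := (hstep p (by omega)).2 hp2
        refine ⟨p + 1, by omega, ?_⟩
        push_cast
        omega
    obtain ⟨n, hn1, hn2⟩ := hdesc ((σ (max N M)).toNat + 1)
    have h1 : 0 ≤ σ n := hσ0 n (by omega)
    have h2 : 0 ≤ σ (max N M) := hσ0 _ hMle
    have h3 := Int.toNat_of_nonneg h2
    push_cast at hn2
    omega
  -- conclusion: the state at time M is nonnegative
  refine ⟨gameState m x s M, ?_, degSum_gameState m x s M, nonterm_tail m hs M⟩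
  intro v
  exact state_nonneg_of_fired m hloop hs v M ⟨f v, hfM v, hf_spec v (hSall v)⟩

end Aux3


section Aux4

variable (m : V → V → ℕ)

lemma degSum_nonneg_of_nonneg {y : V → ℤ} (hy : 0 ≤ y) : 0 ≤ degSum y :=
  Finset.sum_nonneg fun v _ => hy v

lemma degSum_nonneg_of_nonterm (hloop : Loopless m) (hconn : StronglyConnected m)
    {x : V → ℤ} (hx : ¬ Terminating m x) : 0 ≤ degSum x := by
  obtain ⟨y, hy, hdy, -⟩ := exists_nonneg_nonterm m hloop hconn hx
  rw [← hdy]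
  exact degSum_nonneg_of_nonneg hy

lemma exists_minNonTerm (hloop : Loopless m) (hconn : StronglyConnected m) :
    ∀ N : ℕ, ∀ y : V → ℤ, ¬ Terminating m y → degSum y ≤ (N : ℤ) →
      ∃ x', MinNonTerm m x' ∧ degSum x' ≤ degSum y := by
  intro N
  induction N with
  | zero =>
    intro y hy hd
    by_cases hmin : MinNonTerm m y
    · exact ⟨y, hmin, le_refl _⟩
    · exfalso
      have hex : ∃ v, ¬ Terminating m (fun u => y u - if u = v then 1 else 0) := by
        by_contra hc; push_neg at hc; exact hmin ⟨hy, hc⟩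
      obtain ⟨v, hv⟩ := hex
      have heq : (fun u => y u - if u = v then 1 else 0) = y - oneAt v := rfl
      rw [heq] at hv
      have h0 := degSum_nonneg_of_nonterm m hloop hconn hv
      rw [degSum_sub, degSum_oneAt] at h0
      omega
  | succ N ih =>
    intro y hy hd
    by_cases hmin : MinNonTerm m y
    · exact ⟨y, hmin, le_refl _⟩
    · have hex : ∃ v, ¬ Terminating m (fun u => y u - if u = v then 1 else 0) := by
        by_contra hc; push_neg at hc; exact hmin ⟨hy, hc⟩
      obtain ⟨v, hv⟩ := hex
      have heq : (fun u => y u - if u = v then 1 else 0) = y - oneAt v := rfl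
      rw [heq] at hv
      have hdsub : degSum (y - oneAt v) = degSum y - 1 := by rw [degSum_sub, degSum_oneAt]
      obtain ⟨x', hx', hle⟩ := ih (y - oneAt v) hv (by push_cast at hd ⊢; omega)
      exact ⟨x', hx', by omega⟩

end Aux4

/-- If a strongly connected digraph has the Riemann–Roch property, then every minimally
non-terminating chip-distribution has degree `dist(0)`. -/
theorem minNonTerm_degree_of_RR
    {V : Type} [Fintype V] [DecidableEq V] [Nonempty V]
    (m : V → V → ℕ) (hloop : Loopless m) (hconn : StronglyConnected m)
    (hRR : ∃ K : V → ℤ, ∃ t : ℤ,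
      ∀ x : V → ℤ, (chipDist m x : ℤ) - (chipDist m (K - x) : ℤ) = t - degSum x)
    (x : V → ℤ) (hx : MinNonTerm m x) :
    degSum x = (chipDist m (0 : V → ℤ) : ℤ) := by
  obtain ⟨K, t, hK⟩ := hRR
  have hx0 := hx.1
  have hdegx : degSum x = t := minNonTerm_deg m hK hx
  -- dist 0 ≤ t
  obtain ⟨y, hy, hdy, hnty⟩ := exists_nonneg_nonterm m hloop hconn hx0
  have hyge : 0 ≤ degSum y := degSum_nonneg_of_nonneg hy
  have hle : chipDist m (0 : V → ℤ) ≤ (degSum y).toNat := by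
    refine chipDist_le m hy (Int.toNat_of_nonneg hyge).symm ?_
    rw [zero_add]
    exact hnty
  have hle' : (chipDist m (0 : V → ℤ) : ℤ) ≤ degSum y := by
    have := Int.toNat_of_nonneg hyge
    exact_mod_cast le_trans (Nat.cast_le.mpr hle) (le_of_eq this)
  -- t ≤ dist 0
  obtain ⟨y2, hy2, hdy2, hnty2⟩ := chipDist_mem m hx0 (0 : V → ℤ)
  rw [zero_add] at hnty2
  have hy2ge : 0 ≤ degSum y2 := degSum_nonneg_of_nonneg hy2
  obtain ⟨x', hx', hlex⟩ := exists_minNonTerm m hloop hconn (degSum y2).toNat y2 hnty2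
    (le_of_eq (Int.toNat_of_nonneg hy2ge).symm)
  have hdegx' : degSum x' = t := minNonTerm_deg m hK hx'
  omega
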